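/- (Variance bound for the Poissonized kernel estimator.) Let Y_1,…,Y_M be independent with Y_i ~ Poisson(n p_{Mi}) and Σ_i p_{Mi} = 1. Let w ≥ 0 and F̃_M(x) = (1/M) Σ_{j=1}^M 1_{[(M/(nk)) Σ_i w((j−i)/k) Y_i ≤ x]}, F̄_M(x) = (1/M) Σ_{j=1}^M 1_{[(1/k) Σ_i w((j−i)/k) M p_{Mi} ≤ x]}. Then E ∫ |F̃_M − F̄_M| dx ≤ √( (M/(nk)) Σ_{ℓ∈ℤ} (1/k) w²(ℓ/k) ). -/

import Mathlib

open MeasureTheory ProbabilityTheory Finset Real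
open scoped Nat NNReal ENNReal

lemma hs_exp (r : ℝ) : HasSum (fun n : ℕ => r ^ n / n !) (Real.exp r) := by
  rw [Real.exp_eq_exp_ℝ]; exact NormedSpace.expSeries_div_hasSum_exp r

lemma hs_mul (r : ℝ) : HasSum (fun n : ℕ => (n : ℝ) * (r ^ n / n !)) (r * Real.exp r) := by
  refine (hasSum_nat_add_iff' (f := fun n : ℕ => (n : ℝ) * (r ^ n / n !))
    (g := r * Real.exp r) 1).mp ?_
  simp only [Finset.sum_range_one, Nat.cast_zero, zero_mul, sub_zero]
  refine ((hs_exp r).mul_left r).congr_fun fun n => ?_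
  have hn : ((n)! : ℝ) ≠ 0 := Nat.cast_ne_zero.mpr (Nat.factorial_ne_zero n)
  push_cast [Nat.factorial_succ]
  field_simp
  ring

lemma hs_mul2 (r : ℝ) :
    HasSum (fun n : ℕ => (n : ℝ) * ((n:ℝ) - 1) * (r ^ n / n !)) (r^2 * Real.exp r) := by
  refine (hasSum_nat_add_iff' (f := fun n : ℕ => (n : ℝ) * ((n:ℝ) - 1) * (r ^ n / n !))
    (g := r^2 * Real.exp r) 2).mp ?_
  simp only [Finset.sum_range_succ, Finset.sum_range_one, Nat.cast_zero, Nat.cast_one]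
  norm_num
  refine ((hs_exp r).mul_left (r^2)).congr_fun fun n => ?_
  have hn : ((n)! : ℝ) ≠ 0 := Nat.cast_ne_zero.mpr (Nat.factorial_ne_zero n)
  push_cast [Nat.factorial_succ]
  field_simp
  ring

lemma hs_sq (r : ℝ) :
    HasSum (fun n : ℕ => (n : ℝ)^2 * (r ^ n / n !)) ((r^2 + r) * Real.exp r) := by
  have h := (hs_mul2 r).add (hs_mul r)
  have : ((r^2 + r) * Real.exp r) = r^2 * Real.exp r + r * Real.exp r := by ring
  rw [this]
  exact h.congr_fun fun n => by ring

namespace ProbabilityTheory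

lemma poisson_meas_singleton (r : ℝ≥0) (a : ℕ) :
    poissonMeasure r {a} = ENNReal.ofReal (poissonPMFReal r a) := by
  rw [poissonMeasure_singleton]
  rfl

lemma poisson_integrable {r : ℝ≥0} {f : ℕ → ℝ}
    (h : Summable (fun n => poissonPMFReal r n * |f n|)) :
    Integrable f (poissonMeasure r) := by
  refine ⟨StronglyMeasurable.aestronglyMeasurable ?_, ?_⟩
  · exact stronglyMeasurable_iff_measurable.mpr (measurable_from_top)
  · rw [HasFiniteIntegral, lintegral_countable']
    have heq : ∀ a : ℕ, ‖f a‖ₑ * poissonMeasure r {a}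
        = ENNReal.ofReal (poissonPMFReal r a * |f a|) := by
      intro a
      rw [poisson_meas_singleton, ENNReal.ofReal_mul poissonPMFReal_nonneg, mul_comm]
      congr 1
      simp [Real.enorm_eq_ofReal_abs]
    simp_rw [heq]
    rw [← ENNReal.ofReal_tsum_of_nonneg (fun n => mul_nonneg poissonPMFReal_nonneg (abs_nonneg _)) h]
    exact ENNReal.ofReal_lt_top

lemma poisson_integral {r : ℝ≥0} {f : ℕ → ℝ} {S : ℝ}
    (h : HasSum (fun n => poissonPMFReal r n * f n) S)
    (hint : Integrable f (poissonMeasure r)) :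
    ∫ n, f n ∂(poissonMeasure r) = S := by
  rw [integral_poissonMeasure' hint]
  exact h.tsum_eq

end ProbabilityTheory

lemma indicator_diff_eq (a b : ℝ) (hab : a ≤ b) :
    (fun x : ℝ => |(if a ≤ x then (1:ℝ) else 0) - (if b ≤ x then (1:ℝ) else 0)|)
      = Set.indicator (Set.Ico a b) (fun _ => (1:ℝ)) := by
  funext x
  by_cases h1 : a ≤ x <;> by_cases h2 : b ≤ x <;>
    simp [Set.indicator_apply, Set.mem_Ico, h1, h2, not_le.mp, abs_of_nonneg] <;>
    first
      | (exfalso; exact h1 (hab.trans h2))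
      | simp_all [not_le]

lemma integral_indicator_diff (a b : ℝ) :
    ∫ x : ℝ, |(if a ≤ x then (1:ℝ) else 0) - (if b ≤ x then (1:ℝ) else 0)| = |a - b| := by
  rcases le_total a b with hab | hab
  · rw [indicator_diff_eq a b hab, integral_indicator measurableSet_Ico]
    simp [hab, Real.volume_Ico, ENNReal.toReal_ofReal (sub_nonneg.mpr hab),
      abs_of_nonpos (sub_nonpos.mpr hab)]
  · have : (fun x : ℝ => |(if a ≤ x then (1:ℝ) else 0) - (if b ≤ x then (1:ℝ) else 0)|)
        = fun x : ℝ => |(if b ≤ x then (1:ℝ) else 0) - (if a ≤ x then (1:ℝ) else 0)| := by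
      funext x; rw [abs_sub_comm]
    rw [this, indicator_diff_eq b a hab, integral_indicator measurableSet_Ico]
    simp [hab, Real.volume_Ico, ENNReal.toReal_ofReal (sub_nonneg.mpr hab),
      abs_of_nonneg (sub_nonneg.mpr hab)]

lemma integrable_indicator_diff (a b : ℝ) :
    Integrable (fun x : ℝ => |(if a ≤ x then (1:ℝ) else 0) - (if b ≤ x then (1:ℝ) else 0)|) := by
  rcases le_total a b with hab | hab
  · rw [indicator_diff_eq a b hab]
    rw [integrable_indicator_iff measurableSet_Ico]
    exact (integrableOn_const_iff (C := (1:ℝ))).mpr (Or.inr measure_Ico_lt_top)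
  · have : (fun x : ℝ => |(if a ≤ x then (1:ℝ) else 0) - (if b ≤ x then (1:ℝ) else 0)|)
        = fun x : ℝ => |(if b ≤ x then (1:ℝ) else 0) - (if a ≤ x then (1:ℝ) else 0)| := by
      funext x; rw [abs_sub_comm]
    rw [this, indicator_diff_eq b a hab, integrable_indicator_iff measurableSet_Ico]
    exact (integrableOn_const_iff (C := (1:ℝ))).mpr (Or.inr measure_Ico_lt_top)

lemma integral_abs_le_sqrt {Ω : Type*} [MeasurableSpace Ω] {P : Measure Ω}
    [IsProbabilityMeasure P] {Z : Ω → ℝ} (hZ : MemLp Z 2 P) :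
    ∫ ω, |Z ω| ∂P ≤ Real.sqrt (∫ ω, Z ω ^ 2 ∂P) := by
  have hconj : (2:ℝ).HolderConjugate 2 := Real.HolderConjugate.two_two
  have h2 : ENNReal.ofReal (2:ℝ) = 2 := by norm_num
  have habs : MemLp (fun ω => |Z ω|) (ENNReal.ofReal (2:ℝ)) P := by rw [h2]; exact hZ.abs
  have hone : MemLp (fun _ : Ω => (1:ℝ)) (ENNReal.ofReal (2:ℝ)) P := by
    rw [h2]; exact memLp_const 1
  have := integral_mul_le_Lp_mul_Lq_of_nonneg hconj
    (Filter.Eventually.of_forall fun ω => abs_nonneg (Z ω))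
    (Filter.Eventually.of_forall fun _ => zero_le_one) habs hone
  simp only [mul_one, Real.one_rpow] at this
  have hrw : ∀ ω, |Z ω| ^ (2:ℝ) = Z ω ^ 2 := by
    intro ω
    rw [show (2:ℝ) = ((2:ℕ):ℝ) by norm_num, Real.rpow_natCast, sq_abs]
  simp_rw [hrw] at this
  rw [integral_const] at this
  simp only [measure_univ, probReal_univ, ENNReal.toReal_one, smul_eq_mul, mul_one, Real.one_rpow] at this
  rw [Real.sqrt_eq_rpow]
  exact_mod_cast this
namespace ProbabilityTheory

lemma poisson_hasSum_mul (r : ℝ≥0) :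
    HasSum (fun n : ℕ => poissonPMFReal r n * (n:ℝ)) (r:ℝ) := by
  have h := (hs_mul (r:ℝ)).mul_left (Real.exp (-(r:ℝ)))
  have he : Real.exp (-(r:ℝ)) * ((r:ℝ) * Real.exp (r:ℝ)) = (r:ℝ) := by
    rw [Real.exp_neg]; field_simp
  rw [he] at h
  refine h.congr_fun fun n => ?_
  unfold poissonPMFReal
  push_cast
  ring

lemma poisson_hasSum_sq (r : ℝ≥0) :
    HasSum (fun n : ℕ => poissonPMFReal r n * (n:ℝ)^2) ((r:ℝ)^2 + (r:ℝ)) := by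
  have h := (hs_sq (r:ℝ)).mul_left (Real.exp (-(r:ℝ)))
  have he : Real.exp (-(r:ℝ)) * (((r:ℝ)^2 + (r:ℝ)) * Real.exp (r:ℝ)) = ((r:ℝ)^2 + (r:ℝ)) := by
    rw [Real.exp_neg]; field_simp
  rw [he] at h
  refine h.congr_fun fun n => ?_
  unfold poissonPMFReal
  push_cast
  ring

lemma poisson_integrable_id (r : ℝ≥0) :
    Integrable (fun n : ℕ => (n:ℝ)) (poissonMeasure r) := by
  apply poisson_integrable
  refine ((poisson_hasSum_mul r).summable).congr fun n => ?_
  rw [abs_of_nonneg (Nat.cast_nonneg n)]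

lemma poisson_integrable_sq (r : ℝ≥0) :
    Integrable (fun n : ℕ => (n:ℝ)^2) (poissonMeasure r) := by
  apply poisson_integrable
  refine ((poisson_hasSum_sq r).summable).congr fun n => ?_
  rw [abs_of_nonneg (sq_nonneg _)]

lemma poisson_integral_id (r : ℝ≥0) :
    ∫ n : ℕ, (n:ℝ) ∂(poissonMeasure r) = (r:ℝ) :=
  poisson_integral (poisson_hasSum_mul r) (poisson_integrable_id r)

lemma poisson_integral_sq (r : ℝ≥0) :
    ∫ n : ℕ, (n:ℝ)^2 ∂(poissonMeasure r) = (r:ℝ)^2 + (r:ℝ) :=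
  poisson_integral (poisson_hasSum_sq r) (poisson_integrable_sq r)

lemma poisson_memℒp_two (r : ℝ≥0) :
    MemLp (fun n : ℕ => (n:ℝ)) 2 (poissonMeasure r) := by
  refine (memLp_two_iff_integrable_sq ?_).mpr ?_
  · exact (stronglyMeasurable_iff_measurable.mpr measurable_from_top).aestronglyMeasurable
  · exact poisson_integrable_sq r

lemma poisson_variance (r : ℝ≥0) :
    variance (fun n : ℕ => (n:ℝ)) (poissonMeasure r) = (r:ℝ) := by
  rw [variance_eq_sub (poisson_memℒp_two r)]
  have h1 : (poissonMeasure r)[(fun n : ℕ => (n:ℝ)) ^ 2] = (r:ℝ)^2 + (r:ℝ) := by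
    simpa [Pi.pow_apply] using poisson_integral_sq r
  rw [h1, poisson_integral_id r]
  ring

end ProbabilityTheory

section transfer
variable {Ω : Type*} [MeasurableSpace Ω] {P : Measure Ω} [IsProbabilityMeasure P]

lemma variance_map_nat {Y : Ω → ℕ} (hY : Measurable Y) (g : ℕ → ℝ)
    (hg : MemLp g 2 (Measure.map Y P)) :
    variance (fun ω => g (Y ω)) P = variance g (Measure.map Y P) := by
  haveI : IsProbabilityMeasure (Measure.map Y P) := Measure.isProbabilityMeasure_map hY.aemeasurable
  have hgm : AEStronglyMeasurable g (Measure.map Y P) :=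
    (stronglyMeasurable_iff_measurable.mpr measurable_from_top).aestronglyMeasurable
  have hcomp : MemLp (fun ω => g (Y ω)) 2 P :=
    (memLp_map_measure_iff hgm hY.aemeasurable).mp hg
  rw [variance_eq_sub hcomp, variance_eq_sub hg]
  have h1 : ∫ a, g a ∂(Measure.map Y P) = ∫ ω, g (Y ω) ∂P :=
    integral_map hY.aemeasurable hgm
  have h2 : ∫ a, (g a)^2 ∂(Measure.map Y P) = ∫ ω, (g (Y ω))^2 ∂P :=
    integral_map hY.aemeasurable (hgm.pow 2)
  simp only [Pi.pow_apply]
  rw [h1, h2]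

lemma integral_map_nat {Y : Ω → ℕ} (hY : Measurable Y) (g : ℕ → ℝ) :
    ∫ ω, g (Y ω) ∂P = ∫ a, g a ∂(Measure.map Y P) :=
  (integral_map hY.aemeasurable
    (stronglyMeasurable_iff_measurable.mpr measurable_from_top).aestronglyMeasurable).symm

end transfer


open MeasureTheory ProbabilityTheory Finset

/-- Variance bound for the Poissonized kernel estimator: for independent
`Y_i ~ Poisson(n p_i)` with `Σ_i p_i = 1` and a nonnegative kernel `w`,
`E ∫ |F̃_M − F̄_M| dx ≤ √((M/(nk)) Σ_{ℓ∈ℤ} (1/k) w(ℓ/k)²)`. -/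
theorem stmt18 {Ω : Type*} [MeasureSpace Ω] (P : Measure Ω) [IsProbabilityMeasure P]
    (M n : ℕ) (hM : 0 < M) (hn : 0 < n) (kb : ℝ) (hkb : 0 < kb)
    (w : ℝ → ℝ) (hw_nonneg : ∀ u, 0 ≤ w u)
    (hw_sq_summable : Summable (fun ℓ : ℤ => (w ((ℓ : ℝ) / kb)) ^ 2))
    (p : ℕ → NNReal) (hp_sum : ∑ i ∈ Finset.Icc 1 M, p i = 1)
    (Y : ℕ → Ω → ℕ) (hmeas : ∀ i, Measurable (Y i))
    (hindep : iIndepFun (fun i : Fin M => Y (i + 1)) P)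
    (hpois : ∀ i ∈ Finset.Icc 1 M,
      Measure.map (Y i) P = poissonMeasure ((n : NNReal) * p i))
    (Ftilde : Ω → ℝ → ℝ) (Fbar : ℝ → ℝ)
    (hFtilde : ∀ ω x, Ftilde ω x = (1 / M : ℝ) * ∑ j ∈ Finset.Icc 1 M,
      (if (M : ℝ) / ((n : ℝ) * kb) *
          ∑ i ∈ Finset.Icc 1 M, w (((j : ℝ) - (i : ℝ)) / kb) * (Y i ω : ℝ) ≤ x
        then (1 : ℝ) else 0))
    (hFbar : ∀ x, Fbar x = (1 / M : ℝ) * ∑ j ∈ Finset.Icc 1 M,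
      (if (1 / kb) *
          ∑ i ∈ Finset.Icc 1 M, w (((j : ℝ) - (i : ℝ)) / kb) * ((M : ℝ) * (p i : ℝ)) ≤ x
        then (1 : ℝ) else 0)) :
    ∫ ω, (∫ x : ℝ, |Ftilde ω x - Fbar x|) ∂P ≤
      Real.sqrt ((M : ℝ) / ((n : ℝ) * kb) *
        ∑' ℓ : ℤ, (1 / kb) * (w ((ℓ : ℝ) / kb)) ^ 2) := by
  classical
  have hn0 : (n:ℝ) ≠ 0 := Nat.cast_ne_zero.mpr hn.ne'
  have hM0 : (M:ℝ) ≠ 0 := Nat.cast_ne_zero.mpr hM.ne'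
  have hMpos : (0:ℝ) < M := Nat.cast_pos.mpr hM
  have hkb0 : kb ≠ 0 := hkb.ne'
  set s : Finset ℕ := Finset.Icc 1 M with hs
  set c : ℝ := (M:ℝ) / ((n:ℝ) * kb) with hc
  set wj : ℕ → ℕ → ℝ := fun j i => w (((j:ℝ) - (i:ℝ)) / kb) with hwj
  set a : ℕ → Ω → ℝ := fun j ω => c * ∑ i ∈ s, wj j i * (Y i ω : ℝ) with ha
  set b : ℕ → ℝ := fun j => (1/kb) * ∑ i ∈ s, wj j i * ((M:ℝ) * (p i : ℝ)) with hb
  set V : ℕ → ℝ := fun j => ∑ i ∈ s, (c * wj j i)^2 * ((n:ℝ) * (p i : ℝ)) with hV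
  set T : ℝ := ∑' ℓ : ℤ, (w ((ℓ:ℝ) / kb))^2 with hT
  have hT0 : 0 ≤ T := tsum_nonneg fun ℓ => sq_nonneg _
  have hcast_meas : ∀ (g : ℕ → ℝ) (μ : Measure ℕ), AEStronglyMeasurable g μ := fun g μ =>
    (stronglyMeasurable_iff_measurable.mpr measurable_from_top).aestronglyMeasurable
  have hY2 : ∀ i ∈ s, MemLp (fun ω => (Y i ω : ℝ)) 2 P := by
    intro i hi
    have h := poisson_memℒp_two ((n : NNReal) * p i)
    rw [← hpois i hi] at h
    exact (memLp_map_measure_iff (hcast_meas _ _) (hmeas i).aemeasurable).mp h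
  have hYmean : ∀ i ∈ s, ∫ ω, (Y i ω : ℝ) ∂P = (n:ℝ) * (p i : ℝ) := by
    intro i hi
    rw [integral_map_nat (hmeas i) (fun t : ℕ => (t:ℝ)), hpois i hi, poisson_integral_id]
    push_cast; ring
  have hYvar : ∀ i ∈ s, variance (fun ω => (Y i ω : ℝ)) P = (n:ℝ) * (p i : ℝ) := by
    intro i hi
    rw [variance_map_nat (hmeas i) (fun t : ℕ => (t:ℝ)), hpois i hi, poisson_variance]
    · push_cast; ring
    · rw [hpois i hi]; exact poisson_memℒp_two _
  have hYindep : ∀ i ∈ s, ∀ i' ∈ s, i ≠ i' → IndepFun (Y i) (Y i') P := by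
    intro i hi i' hi' hne
    obtain ⟨hi1, hiM⟩ := Finset.mem_Icc.mp hi
    obtain ⟨hi'1, hi'M⟩ := Finset.mem_Icc.mp hi'
    have h1 : i - 1 < M := by omega
    have h2 : i' - 1 < M := by omega
    have hfne : (⟨i-1, h1⟩ : Fin M) ≠ ⟨i'-1, h2⟩ := by
      intro h; apply hne; have := Fin.mk.inj_iff.mp h; omega
    have h := hindep.indepFun hfne
    simpa [Nat.sub_add_cancel hi1, Nat.sub_add_cancel hi'1] using h
  set X : ℕ → ℕ → Ω → ℝ := fun j i ω => (c * wj j i) * (Y i ω : ℝ) with hX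
  have hX2 : ∀ j, ∀ i ∈ s, MemLp (X j i) 2 P := fun j i hi => (hY2 i hi).const_mul _
  have hXint : ∀ j, ∀ i ∈ s, Integrable (X j i) P := fun j i hi =>
    memLp_one_iff_integrable.mp ((hX2 j i hi).mono_exponent one_le_two)
  have haX : ∀ j ω, a j ω = ∑ i ∈ s, X j i ω := by
    intro j ω
    simp only [ha, hX, Finset.mul_sum]
    exact Finset.sum_congr rfl fun i _ => by ring
  have ha2 : ∀ j, MemLp (a j) 2 P := by
    intro j
    have h : MemLp (fun ω => ∑ i ∈ s, X j i ω) 2 P := memLp_finset_sum s (hX2 j)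
    have he : a j = fun ω => ∑ i ∈ s, X j i ω := funext fun ω => haX j ω
    rw [he]; exact h
  have hEa : ∀ j, ∫ ω, a j ω ∂P = b j := by
    intro j
    calc ∫ ω, a j ω ∂P = ∫ ω, ∑ i ∈ s, X j i ω ∂P := by simp_rw [haX]
      _ = ∑ i ∈ s, ∫ ω, X j i ω ∂P := integral_finset_sum s (hXint j)
      _ = ∑ i ∈ s, (c * wj j i) * ((n:ℝ) * (p i : ℝ)) := by
          refine Finset.sum_congr rfl fun i hi => ?_
          simp only [hX]
          rw [integral_const_mul, hYmean i hi]
      _ = b j := by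
          simp only [hb, Finset.mul_sum]
          refine Finset.sum_congr rfl fun i hi => ?_
          rw [hc]; field_simp
  have hVarS : ∀ j, variance (a j) P = V j := by
    intro j
    have he : a j = ∑ i ∈ s, X j i := by
      funext ω; rw [haX j ω]; simp [Finset.sum_apply]
    rw [he, IndepFun.variance_sum (hX2 j) ?_]
    · refine Finset.sum_congr rfl fun i hi => ?_
      have : X j i = fun ω => (c * wj j i) * ((fun ω' => (Y i ω' : ℝ)) ω) := rfl
      rw [this, variance_const_mul, hYvar i hi]
    · intro i hi i' hi' hne
      have h : IndepFun ((fun t : ℕ => (c * wj j i) * (t:ℝ)) ∘ (Y i))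
          ((fun t : ℕ => (c * wj j i') * (t:ℝ)) ∘ (Y i')) P :=
        (hYindep i (Finset.mem_coe.mp hi) i' (Finset.mem_coe.mp hi') hne).comp
          measurable_from_top measurable_from_top
      exact h
  have hZsqrt : ∀ j, ∫ ω, |a j ω - b j| ∂P ≤ Real.sqrt (V j) := by
    intro j
    have hZ2 : MemLp (fun ω => a j ω - b j) 2 P := (ha2 j).sub (memLp_const (b j))
    have h1 := integral_abs_le_sqrt hZ2
    have h2 : ∫ ω, (a j ω - b j)^2 ∂P = variance (a j) P := by
      rw [variance_eq_integral (ha2 j).aemeasurable, hEa j]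
    rwa [h2, hVarS j] at h1
  -- Lebesgue-in-x step
  have hLeb : ∀ ω, (∫ x : ℝ, |Ftilde ω x - Fbar x|) ≤ (1/M:ℝ) * ∑ j ∈ s, |a j ω - b j| := by
    intro ω
    set g : ℕ → ℝ → ℝ := fun j x =>
      (if a j ω ≤ x then (1:ℝ) else 0) - (if b j ≤ x then (1:ℝ) else 0) with hg
    have hdiff : ∀ x, Ftilde ω x - Fbar x = (1/M:ℝ) * ∑ j ∈ s, g j x := by
      intro x
      rw [hFtilde, hFbar, ← mul_sub, ← Finset.sum_sub_distrib]
    have hgint : ∀ j ∈ s, Integrable (fun x => |g j x|) := fun j _ =>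
      integrable_indicator_diff (a j ω) (b j)
    calc (∫ x : ℝ, |Ftilde ω x - Fbar x|)
        ≤ ∫ x : ℝ, (1/M:ℝ) * ∑ j ∈ s, |g j x| := by
          refine integral_mono_of_nonneg (Filter.Eventually.of_forall fun x => abs_nonneg _)
            ((integrable_finset_sum s hgint).const_mul _)
            (Filter.Eventually.of_forall fun x => ?_)
          show |Ftilde ω x - Fbar x| ≤ (1/M:ℝ) * ∑ j ∈ s, |g j x|
          rw [hdiff x, abs_mul, abs_of_nonneg (by positivity : (0:ℝ) ≤ 1/M)]
          exact mul_le_mul_of_nonneg_left (Finset.abs_sum_le_sum_abs _ _) (by positivity)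
      _ = (1/M:ℝ) * ∑ j ∈ s, ∫ x : ℝ, |g j x| := by
          rw [integral_const_mul, integral_finset_sum s hgint]
      _ = (1/M:ℝ) * ∑ j ∈ s, |a j ω - b j| := by
          congr 1
          exact Finset.sum_congr rfl fun j _ => integral_indicator_diff (a j ω) (b j)
  -- outer expectation
  have hint_j : ∀ j ∈ s, Integrable (fun ω => |a j ω - b j|) P := fun j _ =>
    (memLp_one_iff_integrable.mp
      (((ha2 j).sub (memLp_const (b j))).mono_exponent one_le_two)).abs
  have step1 : ∫ ω, (∫ x : ℝ, |Ftilde ω x - Fbar x|) ∂P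
      ≤ ∫ ω, (1/M:ℝ) * ∑ j ∈ s, |a j ω - b j| ∂P :=
    integral_mono_of_nonneg
      (Filter.Eventually.of_forall fun ω => integral_nonneg fun x => abs_nonneg _)
      ((integrable_finset_sum s hint_j).const_mul _)
      (Filter.Eventually.of_forall hLeb)
  have step2 : ∫ ω, (1/M:ℝ) * ∑ j ∈ s, |a j ω - b j| ∂P
      = (1/M:ℝ) * ∑ j ∈ s, ∫ ω, |a j ω - b j| ∂P := by
    rw [integral_const_mul, integral_finset_sum s hint_j]
  have hV0 : ∀ j, 0 ≤ V j := fun j =>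
    Finset.sum_nonneg fun i _ => mul_nonneg (sq_nonneg _) (by positivity)
  have step3 : (1/M:ℝ) * ∑ j ∈ s, ∫ ω, |a j ω - b j| ∂P
      ≤ (1/M:ℝ) * ∑ j ∈ s, Real.sqrt (V j) :=
    mul_le_mul_of_nonneg_left (Finset.sum_le_sum fun j _ => hZsqrt j) (by positivity)
  have hcard : (s.card : ℝ) = (M:ℝ) := by
    rw [hs, Nat.card_Icc]; simp
  have step4 : (1/M:ℝ) * ∑ j ∈ s, Real.sqrt (V j)
      ≤ Real.sqrt ((1/M:ℝ) * ∑ j ∈ s, V j) := by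
    have hcs := Finset.sum_mul_sq_le_sq_mul_sq s (fun _ => (1:ℝ)) (fun j => Real.sqrt (V j))
    simp only [one_mul, one_pow, Finset.sum_const, nsmul_eq_mul, mul_one] at hcs
    have hsq : ∀ j ∈ s, Real.sqrt (V j) ^ 2 = V j := fun j _ => Real.sq_sqrt (hV0 j)
    rw [Finset.sum_congr rfl hsq] at hcs
    have hnonneg : 0 ≤ (1/M:ℝ) * ∑ j ∈ s, Real.sqrt (V j) := by
      apply mul_nonneg (by positivity)
      exact Finset.sum_nonneg fun j _ => Real.sqrt_nonneg _
    rw [show ((1:ℝ)/M) * ∑ j ∈ s, Real.sqrt (V j)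
        = Real.sqrt (((1/M:ℝ) * ∑ j ∈ s, Real.sqrt (V j))^2) from
      (Real.sqrt_sq hnonneg).symm]
    apply Real.sqrt_le_sqrt
    rw [mul_pow]
    calc (1/M:ℝ)^2 * (∑ j ∈ s, Real.sqrt (V j))^2
        ≤ (1/M:ℝ)^2 * ((s.card : ℝ) * ∑ j ∈ s, V j) := by
          apply mul_le_mul_of_nonneg_left hcs (by positivity)
      _ = (1/M:ℝ) * ∑ j ∈ s, V j := by rw [hcard]; field_simp
  have hinner : ∀ i, ∑ j ∈ s, (wj j i)^2 ≤ T := by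
    intro i
    have hcastj : ∀ j : ℕ, (wj j i)^2 = w (((((j:ℤ) - (i:ℤ)) : ℤ) : ℝ) / kb)^2 := by
      intro j; simp only [hwj]; norm_num
    calc ∑ j ∈ s, (wj j i)^2
        = ∑ j ∈ s, w ((((j:ℤ) - (i:ℤ) : ℤ) : ℝ) / kb)^2 := Finset.sum_congr rfl fun j _ => hcastj j
      _ = ∑ ℓ ∈ s.image (fun j : ℕ => (j:ℤ) - (i:ℤ)), w ((ℓ:ℝ)/kb)^2 := by
          rw [Finset.sum_image (fun x _ y _ h => by omega)]
      _ ≤ T := hw_sq_summable.sum_le_tsum _ (fun ℓ _ => sq_nonneg _)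
  have hps : ∑ i ∈ s, (p i : ℝ) = 1 := by
    have := congrArg (fun q : NNReal => (q:ℝ)) hp_sum
    push_cast at this
    exact this
  have step5 : (1/M:ℝ) * ∑ j ∈ s, V j ≤ (M:ℝ)/((n:ℝ)*kb^2) * T := by
    have hswap : ∑ j ∈ s, V j = ∑ i ∈ s, ((n:ℝ)*(p i:ℝ)) * c^2 * (∑ j ∈ s, (wj j i)^2) := by
      simp only [hV]
      rw [Finset.sum_comm]
      refine Finset.sum_congr rfl fun i _ => ?_
      rw [Finset.mul_sum]
      exact Finset.sum_congr rfl fun j _ => by ring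
    have hle : ∑ j ∈ s, V j ≤ ∑ i ∈ s, ((n:ℝ)*(p i:ℝ)) * c^2 * T := by
      rw [hswap]
      exact Finset.sum_le_sum fun i hi =>
        mul_le_mul_of_nonneg_left (hinner i) (by positivity)
    have heq : ∑ i ∈ s, ((n:ℝ)*(p i:ℝ)) * c^2 * T = (n:ℝ) * c^2 * T := by
      rw [← Finset.sum_mul, ← Finset.sum_mul]
      rw [show ∑ i ∈ s, (n:ℝ)*(p i:ℝ) = (n:ℝ) * ∑ i ∈ s, (p i:ℝ) from by rw [Finset.mul_sum]]
      rw [hps, mul_one]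
    calc (1/M:ℝ) * ∑ j ∈ s, V j ≤ (1/M:ℝ) * ((n:ℝ) * c^2 * T) := by
          apply mul_le_mul_of_nonneg_left _ (by positivity)
          rw [← heq]; exact hle
      _ = (M:ℝ)/((n:ℝ)*kb^2) * T := by rw [hc]; field_simp
  have hRHS : c * ∑' ℓ : ℤ, (1 / kb) * (w ((ℓ : ℝ) / kb)) ^ 2
      = (M:ℝ)/((n:ℝ)*kb^2) * T := by
    rw [tsum_mul_left, hc, hT]
    ring
  calc ∫ ω, (∫ x : ℝ, |Ftilde ω x - Fbar x|) ∂P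
      ≤ (1/M:ℝ) * ∑ j ∈ s, Real.sqrt (V j) := by
        rw [← step2] at step3; exact (step1.trans step3)
    _ ≤ Real.sqrt ((1/M:ℝ) * ∑ j ∈ s, V j) := step4
    _ ≤ Real.sqrt ((M:ℝ)/((n:ℝ)*kb^2) * T) := Real.sqrt_le_sqrt step5
    _ = Real.sqrt (c * ∑' ℓ : ℤ, (1 / kb) * (w ((ℓ : ℝ) / kb)) ^ 2) := by
        rw [hRHS]
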